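/- Suppose g is strictly increasing and bounded on [0,∞) with positive limit g(∞) > 0 at infinity. Let μ, μ₁, μ₂, μ₃, … be Borel measures on ℝⁿ with 0 < μ(ℝⁿ) < ∞ and 0 < μ_k(ℝⁿ) < ∞, and suppose μ_k → μ weakly. Writing x_c(·) for the unique point where the associated vector field vanishes (which exists and is unique for each of these measures), one has x_c(μ_k) → x_c(μ) as k → ∞. -/

import Mathlib

open MeasureTheory Filter Set Topology
open scoped RealInnerProductSpace

/-- The radial vector field `v(y) = g(|y|) y/|y|` (with `v(0)=0`). -/
noncomputable def radialField {n : ℕ} (g : ℝ → ℝ)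
    (y : EuclideanSpace ℝ (Fin n)) : EuclideanSpace ℝ (Fin n) :=
  (g ‖y‖ / ‖y‖) • y

/-- The vector field `V_ν(x) = ∫ v(x+y) dν(y)`. -/
noncomputable def VField {n : ℕ} (g : ℝ → ℝ)
    (ν : Measure (EuclideanSpace ℝ (Fin n)))
    (x : EuclideanSpace ℝ (Fin n)) : EuclideanSpace ℝ (Fin n) :=
  ∫ y, radialField g (x + y) ∂ν

lemma norm_radialField {n : ℕ} (g : ℝ → ℝ) (hg0 : g 0 = 0)
    (y : EuclideanSpace ℝ (Fin n)) : ‖radialField g y‖ = |g ‖y‖| := by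
  rcases eq_or_ne y 0 with rfl | hy
  · simp [radialField, hg0]
  · have hy' : ‖y‖ ≠ 0 := norm_ne_zero_iff.mpr hy
    rw [radialField, norm_smul, Real.norm_eq_abs, abs_div, abs_norm,
      div_mul_eq_mul_div, mul_div_assoc, div_self hy', mul_one]

lemma inner_radialField {n : ℕ} (g : ℝ → ℝ)
    (y c : EuclideanSpace ℝ (Fin n)) :
    ⟪radialField g y, c⟫ = (g ‖y‖ / ‖y‖) * ⟪y, c⟫ := by
  rw [radialField, real_inner_smul_left]

/-- monotonicity estimate: `⟪v a, a - b⟫ ≥ g‖a‖ (‖a‖ - ‖b‖)` -/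
lemma inner_radialField_sub {n : ℕ} (g : ℝ → ℝ) (hg0 : g 0 = 0)
    (hgnn : ∀ r, 0 ≤ r → 0 ≤ g r)
    (a b : EuclideanSpace ℝ (Fin n)) :
    g ‖a‖ * (‖a‖ - ‖b‖) ≤ ⟪radialField g a, a - b⟫ := by
  rcases eq_or_ne a 0 with rfl | ha
  · simp [radialField, hg0]
  · have ha' : (0:ℝ) < ‖a‖ := norm_pos_iff.mpr ha
    rw [inner_radialField, inner_sub_right, real_inner_self_eq_norm_sq]
    have h1 : ⟪a, b⟫ ≤ ‖a‖ * ‖b‖ := real_inner_le_norm a b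
    have h2 : 0 ≤ g ‖a‖ / ‖a‖ := div_nonneg (hgnn _ ha'.le) ha'.le
    have h3 : ‖a‖ * ‖a‖ - ‖a‖ * ‖b‖ ≤ ‖a‖^2 - ⟪a, b⟫ := by nlinarith
    calc g ‖a‖ * (‖a‖ - ‖b‖) = (g ‖a‖ / ‖a‖) * (‖a‖ * ‖a‖ - ‖a‖ * ‖b‖) := by
          field_simp
      _ ≤ (g ‖a‖ / ‖a‖) * (‖a‖^2 - ⟪a, b⟫) := by
          exact mul_le_mul_of_nonneg_left h3 h2

lemma g_nonneg (g : ℝ → ℝ) (hg0 : g 0 = 0) (hg_mono : StrictMonoOn g (Ici 0)) :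
    ∀ r, 0 ≤ r → 0 ≤ g r := by
  intro r hr
  rcases eq_or_lt_of_le hr with rfl | hr'
  · exact hg0.ge
  · have := hg_mono (self_mem_Ici) (le_of_lt hr') hr'
    rw [hg0] at this
    exact this.le

lemma radialField_strictMono {n : ℕ} (g : ℝ → ℝ) (hg0 : g 0 = 0)
    (hg_mono : StrictMonoOn g (Ici 0))
    (a b : EuclideanSpace ℝ (Fin n)) (hab : a ≠ b) :
    0 < ⟪radialField g a - radialField g b, a - b⟫ := by
  have hgnn := g_nonneg g hg0 hg_mono
  rcases eq_or_ne ‖a‖ ‖b‖ with he | hne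
  · -- equal norms; then ‖a‖ > 0 since a ≠ b
    have hapos : (0:ℝ) < ‖a‖ := by
      rcases (norm_nonneg a).eq_or_lt with h0 | h
      · exfalso
        have hb0 : b = 0 := by
          rw [← norm_eq_zero, ← he, ← h0]
        have ha0 : a = 0 := by rw [← norm_eq_zero, ← h0]
        exact hab (ha0.trans hb0.symm)
      · exact h
    have hd : radialField g a - radialField g b = (g ‖a‖ / ‖a‖) • (a - b) := by
      rw [radialField, radialField, ← he, smul_sub]
    rw [hd, real_inner_smul_left, real_inner_self_eq_norm_sq]
    have hgpos : 0 < g ‖a‖ := by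
      have := hg_mono self_mem_Ici (le_of_lt hapos) hapos
      rwa [hg0] at this
    have : (0:ℝ) < ‖a - b‖ := by
      rw [norm_pos_iff]; exact sub_ne_zero_of_ne hab
    positivity
  · have h1 := inner_radialField_sub g hg0 hgnn a b
    have h2 := inner_radialField_sub g hg0 hgnn b a
    have hsum : (g ‖a‖ - g ‖b‖) * (‖a‖ - ‖b‖) ≤
        ⟪radialField g a - radialField g b, a - b⟫ := by
      have : ⟪radialField g a - radialField g b, a - b⟫
          = ⟪radialField g a, a - b⟫ + ⟪radialField g b, b - a⟫ := by
        rw [inner_sub_left]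
        rw [show (b - a : EuclideanSpace ℝ (Fin n)) = -(a - b) by abel, inner_neg_right]
        ring
      rw [this]
      nlinarith [h1, h2]
    refine lt_of_lt_of_le ?_ hsum
    rcases lt_or_gt_of_ne hne with h | h
    · have := hg_mono (norm_nonneg a) (norm_nonneg b) h
      nlinarith
    · have := hg_mono (norm_nonneg b) (norm_nonneg a) h
      nlinarith

lemma radialField_zero {n : ℕ} (g : ℝ → ℝ) :
    radialField (n := n) g 0 = 0 := by simp [radialField]

lemma radialField_continuous {n : ℕ} (g : ℝ → ℝ)
    (hg_cont : ContinuousOn g (Ici 0)) (hg0 : g 0 = 0) :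
    Continuous (radialField (n := n) g) := by
  rw [continuous_iff_continuousAt]
  intro y0
  rcases eq_or_ne y0 0 with rfl | hy0
  · rw [ContinuousAt, radialField_zero]
    have hnorm : Tendsto (fun y : EuclideanSpace ℝ (Fin n) => ‖y‖) (𝓝 0) (𝓝[Ici 0] 0) := by
      apply tendsto_nhdsWithin_of_tendsto_nhds_of_eventually_within
      · simpa using continuous_norm.tendsto (0 : EuclideanSpace ℝ (Fin n))
      · exact Eventually.of_forall fun y => norm_nonneg y
    have hg' : Tendsto (fun y : EuclideanSpace ℝ (Fin n) => |g ‖y‖|) (𝓝 0) (𝓝 0) := by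
      have := (hg_cont 0 self_mem_Ici).tendsto.comp hnorm
      rw [hg0] at this
      simpa [Function.comp_def] using (continuous_abs.tendsto 0).comp this
    exact squeeze_zero_norm (fun y => (norm_radialField g hg0 y).le) hg'
  · have hpos : (0:ℝ) < ‖y0‖ := norm_pos_iff.mpr hy0
    have hgc : ContinuousAt (fun y : EuclideanSpace ℝ (Fin n) => g ‖y‖) y0 :=
      (hg_cont.continuousAt (Ici_mem_nhds hpos)).comp continuous_norm.continuousAt
    exact ((hgc.div continuous_norm.continuousAt hpos.ne').smul continuousAt_id)

lemma unit_dir_diff {n : ℕ} (p q : EuclideanSpace ℝ (Fin n)) (hp : p ≠ 0) (hq : q ≠ 0) :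
    ‖(‖p‖⁻¹ • p : EuclideanSpace ℝ (Fin n)) - ‖q‖⁻¹ • q‖ ≤ 2 * ‖p - q‖ / ‖p‖ := by
  have hp' : (0:ℝ) < ‖p‖ := norm_pos_iff.mpr hp
  have hq' : (0:ℝ) < ‖q‖ := norm_pos_iff.mpr hq
  have key : (‖p‖⁻¹ • p : EuclideanSpace ℝ (Fin n)) - ‖q‖⁻¹ • q
      = ‖p‖⁻¹ • (p - q) + (‖p‖⁻¹ - ‖q‖⁻¹) • q := by module
  rw [key]
  have h1 : ‖(‖p‖⁻¹ • (p - q) : EuclideanSpace ℝ (Fin n))‖ = ‖p - q‖ / ‖p‖ := by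
    rw [norm_smul, Real.norm_eq_abs, abs_inv, abs_norm, inv_mul_eq_div]
  have hle : |‖q‖ - ‖p‖| ≤ ‖p - q‖ := by
    rw [abs_sub_comm]
    exact abs_norm_sub_norm_le p q
  have h2 : ‖((‖p‖⁻¹ - ‖q‖⁻¹) • q : EuclideanSpace ℝ (Fin n))‖ ≤ ‖p - q‖ / ‖p‖ := by
    rw [norm_smul, Real.norm_eq_abs]
    have heq : |‖p‖⁻¹ - ‖q‖⁻¹| * ‖q‖ = |‖q‖ - ‖p‖| / ‖p‖ := by
      rw [show ‖p‖⁻¹ - ‖q‖⁻¹ = (‖q‖ - ‖p‖) / (‖p‖ * ‖q‖) by field_simp,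
        abs_div, abs_of_pos (mul_pos hp' hq')]
      field_simp
    rw [heq]
    exact div_le_div_of_nonneg_right hle hp'.le |>.trans le_rfl
  calc ‖(‖p‖⁻¹ • (p - q) : EuclideanSpace ℝ (Fin n)) + (‖p‖⁻¹ - ‖q‖⁻¹) • q‖
      ≤ ‖(‖p‖⁻¹ • (p - q) : EuclideanSpace ℝ (Fin n))‖
        + ‖((‖p‖⁻¹ - ‖q‖⁻¹) • q : EuclideanSpace ℝ (Fin n))‖ := norm_add_le _ _
    _ ≤ ‖p - q‖ / ‖p‖ + ‖p - q‖ / ‖p‖ := by rw [h1]; exact add_le_add le_rfl h2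
    _ = 2 * ‖p - q‖ / ‖p‖ := by ring

lemma radialField_uniformContinuous {n : ℕ} (g : ℝ → ℝ)
    (hg_cont : ContinuousOn g (Ici 0)) (hg0 : g 0 = 0)
    (C : ℝ) (hC : ∀ r : ℝ, 0 ≤ r → |g r| ≤ C)
    (ginf : ℝ) (hg_lim : Tendsto g atTop (𝓝 ginf)) :
    UniformContinuous (radialField (n := n) g) := by
  have hC0 : 0 ≤ C := le_trans (abs_nonneg _) (hC 0 le_rfl)
  rw [Metric.uniformContinuous_iff]
  intro ε hε
  -- choose M ≥ 1 with |g r - ginf| < ε/8 for r ≥ M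
  obtain ⟨M₀, hM₀⟩ := (Metric.tendsto_atTop.mp hg_lim) (ε/8) (by positivity)
  set M : ℝ := max M₀ 1 with hM
  have hM1 : (1:ℝ) ≤ M := le_max_right _ _
  have hMg : ∀ r, M ≤ r → |g r - ginf| < ε/8 := fun r hr =>
    hM₀ r (le_trans (le_max_left _ _) hr)
  -- uniform continuity on compact ball
  have hcomp : IsCompact (Metric.closedBall (0 : EuclideanSpace ℝ (Fin n)) (3*M+3)) :=
    isCompact_closedBall _ _
  have hUC := hcomp.uniformContinuousOn_of_continuous
    ((radialField_continuous g hg_cont hg0).continuousOn)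
  rw [Metric.uniformContinuousOn_iff] at hUC
  obtain ⟨δ₁, hδ₁pos, hδ₁⟩ := hUC ε hε
  refine ⟨min δ₁ (min 1 (ε/(4*C+4))), by positivity, ?_⟩
  intro p q hpq
  have hpq1 : dist p q < δ₁ := lt_of_lt_of_le hpq (min_le_left _ _)
  have hpq2 : dist p q < 1 := lt_of_lt_of_le hpq ((min_le_right _ _).trans (min_le_left _ _))
  have hpq3 : dist p q < ε/(4*C+4) :=
    lt_of_lt_of_le hpq ((min_le_right _ _).trans (min_le_right _ _))
  by_cases hcase : ‖p‖ ≤ 2*M+2 ∧ ‖q‖ ≤ 2*M+2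
  · -- both in compact ball
    apply hδ₁ p ?_ q ?_ hpq1
    · simp only [Metric.mem_closedBall, dist_zero_right]
      linarith [hcase.1]
    · simp only [Metric.mem_closedBall, dist_zero_right]
      linarith [hcase.2]
  · -- far zone : both norms ≥ 2M+1 ≥ M
    have hfar : 2*M+1 ≤ ‖p‖ ∧ 2*M+1 ≤ ‖q‖ := by
      rw [not_and_or] at hcase
      have hd : ‖p - q‖ < 1 := by rwa [← dist_eq_norm]
      rcases hcase with h | h
      · push_neg at h
        constructor
        · linarith
        · have := abs_norm_sub_norm_le p q
          rw [abs_le] at this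
          have : ‖p‖ - ‖q‖ ≤ ‖p - q‖ := this.2
          linarith
      · push_neg at h
        constructor
        · have := abs_norm_sub_norm_le q p
          rw [abs_le] at this
          have : ‖q‖ - ‖p‖ ≤ ‖q - p‖ := this.2
          have hd' : ‖q - p‖ < 1 := by rwa [norm_sub_rev]
          linarith
        · linarith
    have hppos : (0:ℝ) < ‖p‖ := by linarith [hfar.1]
    have hqpos : (0:ℝ) < ‖q‖ := by linarith [hfar.2]
    have hpne : p ≠ 0 := norm_pos_iff.mp hppos
    have hqne : q ≠ 0 := norm_pos_iff.mp hqpos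
    have hMp : M ≤ ‖p‖ := by linarith [hfar.1]
    have hMq : M ≤ ‖q‖ := by linarith [hfar.2]
    -- decomposition
    have key : radialField g p - radialField g q
        = (g ‖p‖ - g ‖q‖) • ((‖p‖⁻¹ • p : EuclideanSpace ℝ (Fin n)))
          + g ‖q‖ • ((‖p‖⁻¹ • p : EuclideanSpace ℝ (Fin n)) - ‖q‖⁻¹ • q) := by
      rw [radialField, radialField, div_eq_mul_inv, div_eq_mul_inv]
      module
    rw [dist_eq_norm, key]
    have hup : ‖(‖p‖⁻¹ • p : EuclideanSpace ℝ (Fin n))‖ = 1 := by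
      rw [norm_smul, Real.norm_eq_abs, abs_inv, abs_norm, inv_mul_cancel₀ hppos.ne']
    have t1 : ‖((g ‖p‖ - g ‖q‖) • (‖p‖⁻¹ • p : EuclideanSpace ℝ (Fin n)))‖ ≤ ε/4 := by
      rw [norm_smul, hup, mul_one, Real.norm_eq_abs]
      have h1 := hMg _ hMp
      have h2 := hMg _ hMq
      calc |g ‖p‖ - g ‖q‖| = |(g ‖p‖ - ginf) - (g ‖q‖ - ginf)| := by ring_nf
        _ ≤ |g ‖p‖ - ginf| + |g ‖q‖ - ginf| := abs_sub _ _
        _ ≤ ε/8 + ε/8 := by linarith [h1.le, h2.le]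
        _ = ε/4 := by ring
    have t2 : ‖(g ‖q‖ • ((‖p‖⁻¹ • p : EuclideanSpace ℝ (Fin n)) - ‖q‖⁻¹ • q))‖ ≤ ε/2 := by
      rw [norm_smul, Real.norm_eq_abs]
      have hdir := unit_dir_diff p q hpne hqne
      have h3 : 2 * ‖p - q‖ / ‖p‖ ≤ 2 * ‖p - q‖ := by
        rw [div_le_iff₀ hppos]
        nlinarith [norm_nonneg (p - q), hfar.1]
      have h4 : ‖p - q‖ < ε/(4*C+4) := by rwa [← dist_eq_norm]
      calc |g ‖q‖| * ‖(‖p‖⁻¹ • p : EuclideanSpace ℝ (Fin n)) - ‖q‖⁻¹ • q‖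
          ≤ C * (2 * ‖p - q‖) := by
            apply mul_le_mul (hC _ (norm_nonneg q)) (hdir.trans h3) (norm_nonneg _) hC0
        _ ≤ C * (2 * (ε/(4*C+4))) := by nlinarith
        _ ≤ ε/2 := by
            have hden : (0:ℝ) < 4*C+4 := by linarith
            have e1 : C * (2 * (ε/(4*C+4))) = ε * (2*C/(4*C+4)) := by ring
            have e2 : 2*C/(4*C+4) ≤ 1/2 := by
              rw [div_le_iff₀ hden]
              linarith
            rw [e1]
            nlinarith
    calc ‖(g ‖p‖ - g ‖q‖) • ((‖p‖⁻¹ • p : EuclideanSpace ℝ (Fin n)))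
          + g ‖q‖ • ((‖p‖⁻¹ • p : EuclideanSpace ℝ (Fin n)) - ‖q‖⁻¹ • q)‖
        ≤ ‖(g ‖p‖ - g ‖q‖) • ((‖p‖⁻¹ • p : EuclideanSpace ℝ (Fin n)))‖
          + ‖(g ‖q‖ • ((‖p‖⁻¹ • p : EuclideanSpace ℝ (Fin n)) - ‖q‖⁻¹ • q))‖ := norm_add_le _ _
      _ ≤ ε/4 + ε/2 := add_le_add t1 t2
      _ < ε := by linarith

/-- bounded continuous functions are integrable against finite measures -/
lemma bc_integrable {α : Type*} [MeasurableSpace α] [TopologicalSpace α]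
    [OpensMeasurableSpace α] [SecondCountableTopology α] {E : Type*} [NormedAddCommGroup E]
    {f : α → E} (hf : Continuous f) (B : ℝ) (hB : ∀ y, ‖f y‖ ≤ B)
    (ν : Measure α) [IsFiniteMeasure ν] : Integrable f ν :=
  ⟨hf.aestronglyMeasurable, HasFiniteIntegral.of_bounded (C := B) (Eventually.of_forall hB)⟩

/-- the cutoff function -/
noncomputable def cutoff {n : ℕ} (M : ℝ) (y : EuclideanSpace ℝ (Fin n)) : ℝ :=
  max 0 (min 1 (M + 1 - ‖y‖))

lemma cutoff_continuous {n : ℕ} (M : ℝ) : Continuous (cutoff (n := n) M) :=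
  continuous_const.max (continuous_const.min (continuous_const.sub continuous_norm))

lemma cutoff_nonneg {n : ℕ} (M : ℝ) (y : EuclideanSpace ℝ (Fin n)) : 0 ≤ cutoff M y :=
  le_max_left _ _

lemma cutoff_le_one {n : ℕ} (M : ℝ) (y : EuclideanSpace ℝ (Fin n)) : cutoff M y ≤ 1 :=
  max_le zero_le_one (le_trans (min_le_left _ _) le_rfl)

lemma cutoff_eq_one {n : ℕ} (M : ℝ) (y : EuclideanSpace ℝ (Fin n)) (hy : ‖y‖ ≤ M) :
    cutoff M y = 1 := by
  have : (1:ℝ) ≤ M + 1 - ‖y‖ := by linarith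
  rw [cutoff, min_eq_left this, max_eq_right zero_le_one]

lemma cutoff_eq_zero {n : ℕ} (M : ℝ) (y : EuclideanSpace ℝ (Fin n)) (hy : M + 1 ≤ ‖y‖) :
    cutoff M y = 0 := by
  have : M + 1 - ‖y‖ ≤ 0 := by linarith
  rw [cutoff, max_eq_left]
  exact le_trans (min_le_right _ _) this

lemma cutoff_abs {n : ℕ} (M : ℝ) (y : EuclideanSpace ℝ (Fin n)) : |cutoff M y| ≤ 1 := by
  rw [abs_of_nonneg (cutoff_nonneg M y)]; exact cutoff_le_one M y

lemma cutoff_integral_ge {n : ℕ} (M : ℝ) (ν : Measure (EuclideanSpace ℝ (Fin n)))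
    [IsFiniteMeasure ν] :
    (ν (Metric.closedBall 0 M)).toReal ≤ ∫ y, cutoff M y ∂ν := by
  have hind : ∫ y, (Metric.closedBall (0:EuclideanSpace ℝ (Fin n)) M).indicator
      (fun _ => (1:ℝ)) y ∂ν = (ν (Metric.closedBall 0 M)).toReal := by
    rw [integral_indicator_const (1:ℝ) measurableSet_closedBall, smul_eq_mul, mul_one, measureReal_def]
  rw [← hind]
  apply integral_mono
  · exact (integrable_const (1:ℝ)).indicator measurableSet_closedBall
  · exact bc_integrable (cutoff_continuous M) 1 (fun y => by
      rw [Real.norm_eq_abs]; exact cutoff_abs M y) ν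
  · intro y
    by_cases hy : y ∈ Metric.closedBall (0:EuclideanSpace ℝ (Fin n)) M
    · rw [indicator_of_mem hy]
      rw [Metric.mem_closedBall, dist_zero_right] at hy
      exact (cutoff_eq_one M y hy).ge
    · rw [indicator_of_notMem hy]
      exact cutoff_nonneg M y

lemma cutoff_integral_le_mass {n : ℕ} (M : ℝ) (ν : Measure (EuclideanSpace ℝ (Fin n)))
    [IsFiniteMeasure ν] :
    ∫ y, cutoff M y ∂ν ≤ (ν Set.univ).toReal := by
  have : ∫ y, (1:ℝ) ∂ν = (ν Set.univ).toReal := by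
    simp [integral_const, measureReal_def]
  rw [← this]
  apply integral_mono
  · exact bc_integrable (cutoff_continuous M) 1 (fun y => by
      rw [Real.norm_eq_abs]; exact cutoff_abs M y) ν
  · exact integrable_const 1
  · exact cutoff_le_one M

/-- far field estimate: for `‖z‖` large and `‖y‖ ≤ Mp`,
`⟪v(z+y), z⟫ ≥ (ginf/4) ‖z‖`. -/
lemma farfield {n : ℕ} (g : ℝ → ℝ) (hgnn : ∀ r, 0 ≤ r → 0 ≤ g r)
    (ginf : ℝ) (hginf_pos : 0 < ginf)
    (r₁ : ℝ) (hr₁ : ∀ r, r₁ ≤ r → ginf/2 ≤ g r)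
    (Mp : ℝ) (hMp : 0 < Mp)
    (z y : EuclideanSpace ℝ (Fin n)) (hy : ‖y‖ ≤ Mp)
    (hz : max (3*Mp) (r₁ + Mp) ≤ ‖z‖) :
    ginf/4 * ‖z‖ ≤ ⟪radialField g (z + y), z⟫ := by
  have hz3 : 3*Mp ≤ ‖z‖ := le_trans (le_max_left _ _) hz
  have hzr : r₁ + Mp ≤ ‖z‖ := le_trans (le_max_right _ _) hz
  have hzpos : 0 < ‖z‖ := lt_of_lt_of_le (by linarith) hz3
  have hrlb : ‖z‖ - Mp ≤ ‖z + y‖ := by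
    have h0 : ‖z‖ ≤ ‖z + y‖ + ‖y‖ := by
      have := norm_add_le (z + y) (-y)
      simpa using this
    linarith
  have hrub : ‖z + y‖ ≤ ‖z‖ + Mp := le_trans (norm_add_le z y) (by linarith)
  have hrpos : 0 < ‖z + y‖ := lt_of_lt_of_le (by linarith) hrlb
  have hgr : ginf/2 ≤ g ‖z + y‖ := hr₁ _ (by linarith)
  have hinner : ‖z‖ * (‖z‖ - Mp) ≤ ⟪z + y, z⟫ := by
    rw [inner_add_left, real_inner_self_eq_norm_sq]
    have : -(‖y‖ * ‖z‖) ≤ ⟪y, z⟫ := neg_le_of_abs_le (abs_real_inner_le_norm y z)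
    nlinarith
  rw [inner_radialField]
  have hcoef : 0 ≤ g ‖z + y‖ / ‖z + y‖ := div_nonneg (hgnn _ hrpos.le) hrpos.le
  have hApos : 0 ≤ ‖z‖ * (‖z‖ - Mp) := by nlinarith
  calc ginf/4 * ‖z‖ ≤ (ginf/2) * (‖z‖ * (‖z‖ - Mp)) / (‖z‖ + Mp) := by
        rw [le_div_iff₀ (by linarith : (0:ℝ) < ‖z‖ + Mp)]
        nlinarith [mul_nonneg (mul_nonneg hginf_pos.le hzpos.le)
          (by linarith : (0:ℝ) ≤ ‖z‖ - 3*Mp)]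
    _ ≤ (g ‖z + y‖) * (‖z‖ * (‖z‖ - Mp)) / ‖z + y‖ := by
        rw [div_le_div_iff₀ (by linarith) hrpos]
        have hgr0 : 0 ≤ g ‖z + y‖ := hgnn _ hrpos.le
        nlinarith [mul_le_mul_of_nonneg_right (mul_le_mul_of_nonneg_right hgr hApos) hrpos.le,
          mul_le_mul_of_nonneg_left hrub (mul_nonneg hgr0 hApos)]
    _ ≤ (g ‖z + y‖ / ‖z + y‖) * ⟪z + y, z⟫ := by
        rw [show (g ‖z + y‖) * (‖z‖ * (‖z‖ - Mp)) / ‖z + y‖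
          = (g ‖z + y‖ / ‖z + y‖) * (‖z‖ * (‖z‖ - Mp)) by ring]
        exact mul_le_mul_of_nonneg_left hinner hcoef

lemma eucl_abs_apply_le_norm {n : ℕ} (w : EuclideanSpace ℝ (Fin n)) (i : Fin n) :
    |w i| ≤ ‖w‖ := by
  rw [EuclideanSpace.norm_eq]
  have h : ‖w i‖^2 ≤ ∑ j, ‖w j‖^2 :=
    Finset.single_le_sum (f := fun j => ‖w j‖^2) (fun j _ => by positivity) (Finset.mem_univ i)
  have e : |w i| = Real.sqrt (‖w i‖^2) := by
    rw [Real.sqrt_sq (norm_nonneg _), Real.norm_eq_abs]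
  rw [e]
  exact Real.sqrt_le_sqrt h

lemma eucl_norm_le_sum_abs {n : ℕ} (w : EuclideanSpace ℝ (Fin n)) :
    ‖w‖ ≤ ∑ i, |w i| := by
  rw [EuclideanSpace.norm_eq]
  calc Real.sqrt (∑ i, ‖w i‖^2) ≤ Real.sqrt ((∑ i, ‖w i‖)^2) := by
        apply Real.sqrt_le_sqrt
        exact Finset.sum_sq_le_sq_sum_of_nonneg (fun i _ => norm_nonneg _)
    _ = ∑ i, |w i| := by
        rw [Real.sqrt_sq (Finset.sum_nonneg fun i _ => norm_nonneg _)]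
        simp [Real.norm_eq_abs]

lemma radialField_shift_integrable {n : ℕ} (g : ℝ → ℝ)
    (hg_cont : ContinuousOn g (Ici 0)) (hg0 : g 0 = 0)
    (C : ℝ) (hC : ∀ r : ℝ, 0 ≤ r → |g r| ≤ C)
    (ν : Measure (EuclideanSpace ℝ (Fin n))) [IsFiniteMeasure ν]
    (z : EuclideanSpace ℝ (Fin n)) :
    Integrable (fun y => radialField g (z + y)) ν := by
  refine bc_integrable ?_ C ?_ ν
  · exact (radialField_continuous g hg_cont hg0).comp (continuous_const.add continuous_id)
  · intro y
    rw [norm_radialField g hg0]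
    exact hC _ (norm_nonneg _)

lemma inner_VField {n : ℕ} (g : ℝ → ℝ)
    (hg_cont : ContinuousOn g (Ici 0)) (hg0 : g 0 = 0)
    (C : ℝ) (hC : ∀ r : ℝ, 0 ≤ r → |g r| ≤ C)
    (ν : Measure (EuclideanSpace ℝ (Fin n))) [IsFiniteMeasure ν]
    (z c : EuclideanSpace ℝ (Fin n)) :
    ⟪VField g ν z, c⟫ = ∫ y, ⟪radialField g (z + y), c⟫ ∂ν := by
  rw [VField, real_inner_comm,
    ← integral_inner (radialField_shift_integrable g hg_cont hg0 C hC ν z) c]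
  simp_rw [real_inner_comm]

lemma VField_apply {n : ℕ} (g : ℝ → ℝ)
    (hg_cont : ContinuousOn g (Ici 0)) (hg0 : g 0 = 0)
    (C : ℝ) (hC : ∀ r : ℝ, 0 ≤ r → |g r| ≤ C)
    (ν : Measure (EuclideanSpace ℝ (Fin n))) [IsFiniteMeasure ν]
    (z : EuclideanSpace ℝ (Fin n)) (i : Fin n) :
    (VField g ν z) i = ∫ y, radialField g (z + y) i ∂ν :=
  (ContinuousLinearMap.integral_comp_comm (EuclideanSpace.proj i)
    (radialField_shift_integrable g hg_cont hg0 C hC ν z)).symm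


set_option maxHeartbeats 1000000 in
theorem center_of_mass_continuous_dependence {n : ℕ} (hn : 1 ≤ n)
    (g : ℝ → ℝ) (hg_cont : ContinuousOn g (Ici 0)) (hg0 : g 0 = 0)
    (hg_mono : StrictMonoOn g (Ici 0))
    (hg_bdd : ∃ C : ℝ, ∀ r : ℝ, 0 ≤ r → |g r| ≤ C)
    (ginf : ℝ) (hginf_pos : 0 < ginf) (hg_lim : Tendsto g atTop (𝓝 ginf))
    (μ : Measure (EuclideanSpace ℝ (Fin n)))
    (μs : ℕ → Measure (EuclideanSpace ℝ (Fin n)))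
    (hμpos : 0 < μ Set.univ) (hμfin : μ Set.univ < ⊤)
    (hμspos : ∀ k, 0 < μs k Set.univ) (hμsfin : ∀ k, μs k Set.univ < ⊤)
    (hweak : ∀ ψ : EuclideanSpace ℝ (Fin n) → ℝ, Continuous ψ →
      (∃ C : ℝ, ∀ y, |ψ y| ≤ C) →
      Tendsto (fun k => ∫ y, ψ y ∂(μs k)) atTop (𝓝 (∫ y, ψ y ∂μ)))
    (xc : ℕ → EuclideanSpace ℝ (Fin n)) (x : EuclideanSpace ℝ (Fin n))
    (hxc : ∀ k, VField g (μs k) (xc k) = 0) (hx : VField g μ x = 0) :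
    Tendsto xc atTop (𝓝 x) := by
  obtain ⟨C₀, hC₀⟩ := hg_bdd
  have hC0 : 0 ≤ C₀ := le_trans (abs_nonneg _) (hC₀ 0 le_rfl)
  have hgnn := g_nonneg g hg0 hg_mono
  haveI : IsFiniteMeasure μ := ⟨hμfin⟩
  have hinst : ∀ k, IsFiniteMeasure (μs k) := fun k => ⟨hμsfin k⟩
  have hvcont : Continuous (radialField (n := n) g) := radialField_continuous g hg_cont hg0
  have hvbd : ∀ w : EuclideanSpace ℝ (Fin n), ‖radialField g w‖ ≤ C₀ := fun w => by
    rw [norm_radialField g hg0]; exact hC₀ _ (norm_nonneg _)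
  set T : ℝ := (μ Set.univ).toReal with hTdef
  have hT : 0 < T := ENNReal.toReal_pos hμpos.ne' hμfin.ne
  -- mass convergence
  have hmass : Tendsto (fun k => ((μs k) Set.univ).toReal) atTop (𝓝 T) := by
    have h1 := hweak (fun _ => (1:ℝ)) continuous_const ⟨1, fun y => by norm_num⟩
    simpa [integral_const, smul_eq_mul, measureReal_def] using h1
  set B : ℝ := T + 1 with hBdef
  have hB0 : 0 < B := by linarith
  -- r₁ : beyond r₁, g ≥ ginf/2
  obtain ⟨r₁, hr₁⟩ : ∃ r₁ : ℝ, ∀ r, r₁ ≤ r → ginf/2 ≤ g r := by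
    have := hg_lim.eventually (eventually_ge_nhds (by linarith : ginf/2 < ginf))
    rw [eventually_atTop] at this
    obtain ⟨r₁, hr₁⟩ := this
    exact ⟨r₁, hr₁⟩
  -- choose M with C₀ * T < (ginf/4 + C₀) * μ(B_M)
  obtain ⟨M, hM⟩ : ∃ M : ℕ, C₀ * T <
      (ginf/4 + C₀) * (μ (Metric.closedBall 0 (M:ℝ))).toReal := by
    have hmono : Monotone (fun m : ℕ => Metric.closedBall (0:EuclideanSpace ℝ (Fin n)) (m:ℝ)) :=
      fun i j hij => Metric.closedBall_subset_closedBall (by exact_mod_cast hij)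
    have hunion : ⋃ m : ℕ, Metric.closedBall (0:EuclideanSpace ℝ (Fin n)) (m:ℝ) = Set.univ := by
      apply Set.eq_univ_iff_forall.mpr
      intro y
      obtain ⟨m, hm⟩ := exists_nat_ge ‖y‖
      exact Set.mem_iUnion.mpr ⟨m, by simpa [Metric.mem_closedBall, dist_zero_right] using hm⟩
    have h1 : Tendsto (fun m : ℕ => μ (Metric.closedBall 0 (m:ℝ))) atTop (𝓝 (μ Set.univ)) := by
      have := tendsto_measure_iUnion_atTop (μ := μ) hmono
      rwa [hunion] at this
    have h2 : Tendsto (fun m : ℕ => (μ (Metric.closedBall 0 (m:ℝ))).toReal) atTop (𝓝 T) :=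
      (ENNReal.tendsto_toReal hμfin.ne).comp h1
    have h3 : Tendsto (fun m : ℕ => (ginf/4 + C₀) * (μ (Metric.closedBall 0 (m:ℝ))).toReal)
        atTop (𝓝 ((ginf/4 + C₀) * T)) := h2.const_mul _
    have hlt : C₀ * T < (ginf/4 + C₀) * T := by nlinarith
    exact (h3.eventually (eventually_gt_nhds hlt)).exists
  set Mp : ℝ := (M:ℝ) + 1 with hMpdef
  have hMp0 : 0 < Mp := by positivity
  set T₀ : ℝ := max (3*Mp) (r₁ + Mp) with hT₀def
  have hT₀pos : 0 < T₀ := lt_of_lt_of_le (by linarith) (le_max_left _ _)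
  -- cutoff integrals convergence
  have hIk : Tendsto (fun k => ∫ y, cutoff (M:ℝ) y ∂(μs k)) atTop
      (𝓝 (∫ y, cutoff (M:ℝ) y ∂μ)) :=
    hweak _ (cutoff_continuous _) ⟨1, cutoff_abs _⟩
  have hIge : (μ (Metric.closedBall 0 (M:ℝ))).toReal ≤ ∫ y, cutoff (M:ℝ) y ∂μ :=
    cutoff_integral_ge _ μ
  -- eventual positivity of the far-field balance
  have hEvPos : ∀ᶠ k in atTop, 0 < (ginf/4 + C₀) * (∫ y, cutoff (M:ℝ) y ∂(μs k))
      - C₀ * ((μs k) Set.univ).toReal := by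
    have htend : Tendsto (fun k => (ginf/4 + C₀) * (∫ y, cutoff (M:ℝ) y ∂(μs k))
        - C₀ * ((μs k) Set.univ).toReal) atTop
        (𝓝 ((ginf/4 + C₀) * (∫ y, cutoff (M:ℝ) y ∂μ) - C₀ * T)) :=
      (hIk.const_mul _).sub (hmass.const_mul _)
    have hpos : 0 < (ginf/4 + C₀) * (∫ y, cutoff (M:ℝ) y ∂μ) - C₀ * T := by
      have : (ginf/4 + C₀) * (μ (Metric.closedBall 0 (M:ℝ))).toReal
          ≤ (ginf/4 + C₀) * (∫ y, cutoff (M:ℝ) y ∂μ) :=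
        mul_le_mul_of_nonneg_left hIge (by linarith)
      linarith
    exact htend.eventually (eventually_gt_nhds hpos)
  -- boundedness of the zeros
  have hbound : ∀ᶠ k in atTop, ‖xc k‖ ≤ T₀ := by
    filter_upwards [hEvPos] with k hk
    haveI := hinst k
    by_contra hzk'
    push_neg at hzk'
    set z := xc k with hzdef
    have hzk : T₀ ≤ ‖z‖ := hzk'.le
    have hzpos : 0 < ‖z‖ := lt_of_lt_of_le hT₀pos hzk
    -- pointwise lower bound
    have hptwise : ∀ y, ((ginf/4 + C₀) * cutoff (M:ℝ) y - C₀) * ‖z‖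
        ≤ ⟪radialField g (z + y), z⟫ := by
      intro y
      by_cases hy : ‖y‖ ≤ Mp
      · have hff := farfield g hgnn ginf hginf_pos r₁ hr₁ Mp hMp0 z y hy hzk
        have h1 : (ginf/4 + C₀) * cutoff (M:ℝ) y - C₀ ≤ ginf/4 := by
          nlinarith [cutoff_le_one (M:ℝ) y, cutoff_nonneg (M:ℝ) y]
        calc ((ginf/4 + C₀) * cutoff (M:ℝ) y - C₀) * ‖z‖ ≤ ginf/4 * ‖z‖ :=
              mul_le_mul_of_nonneg_right h1 (norm_nonneg z)
          _ ≤ _ := hff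
      · push_neg at hy
        rw [cutoff_eq_zero (M:ℝ) y (by rw [hMpdef] at hy; linarith)]
        have habs := abs_real_inner_le_norm (radialField g (z + y)) z
        have hb := mul_le_mul_of_nonneg_right (hvbd (z + y)) (norm_nonneg z)
        have := neg_abs_le ⟪radialField g (z + y), z⟫
        nlinarith
    -- integrate
    have hint1 : Integrable (fun y => ((ginf/4 + C₀) * cutoff (M:ℝ) y - C₀) * ‖z‖) (μs k) := by
      apply Integrable.mul_const
      exact ((bc_integrable (cutoff_continuous _) 1 (fun y => by
        rw [Real.norm_eq_abs]; exact cutoff_abs _ y) (μs k)).const_mul _).sub (integrable_const _)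
    have hint2 : Integrable (fun y => ⟪radialField g (z + y), z⟫) (μs k) := by
      apply bc_integrable (hvcont.comp (continuous_const.add continuous_id) |>.inner
        continuous_const) (C₀ * ‖z‖)
      intro y
      rw [Real.norm_eq_abs]
      exact le_trans (abs_real_inner_le_norm _ _)
        (mul_le_mul_of_nonneg_right (hvbd _) (norm_nonneg _))
    have hmono' := integral_mono hint1 hint2 hptwise
    have hL : ∫ y, ((ginf/4 + C₀) * cutoff (M:ℝ) y - C₀) * ‖z‖ ∂(μs k)
        = ((ginf/4 + C₀) * (∫ y, cutoff (M:ℝ) y ∂(μs k))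
          - C₀ * ((μs k) Set.univ).toReal) * ‖z‖ := by
      rw [integral_mul_const, integral_sub (((bc_integrable (cutoff_continuous _) 1 (fun y => by
        rw [Real.norm_eq_abs]; exact cutoff_abs _ y) (μs k)).const_mul _))
        (integrable_const _), integral_const_mul, integral_const]
      rw [smul_eq_mul, measureReal_def]
      ring
    have hR : ∫ y, ⟪radialField g (z + y), z⟫ ∂(μs k) = 0 := by
      rw [← inner_VField g hg_cont hg0 C₀ hC₀ (μs k) z z, hxc k, inner_zero_left]
    rw [hL, hR] at hmono'
    nlinarith
  -- convergence of V at the point x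
  have hVx : Tendsto (fun k => ‖VField g (μs k) x‖) atTop (𝓝 0) := by
    have hcoord : ∀ i : Fin n, Tendsto (fun k => (VField g (μs k) x) i) atTop (𝓝 0) := by
      intro i
      have hψc : Continuous (fun y => radialField g (x + y) i) :=
        (EuclideanSpace.proj i).continuous.comp
          (hvcont.comp (continuous_const.add continuous_id))
      have hψb : ∃ Cb : ℝ, ∀ y, |radialField g (x + y) i| ≤ Cb :=
        ⟨C₀, fun y => le_trans (eucl_abs_apply_le_norm _ i) (hvbd _)⟩
      have h1 := hweak _ hψc hψb
      have he : (fun k => ∫ y, radialField g (x + y) i ∂(μs k))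
          = fun k => (VField g (μs k) x) i := by
        funext k
        haveI := hinst k
        exact (VField_apply g hg_cont hg0 C₀ hC₀ (μs k) x i).symm
      rw [he] at h1
      have hx0 : ∫ y, radialField g (x + y) i ∂μ = 0 := by
        rw [← VField_apply g hg_cont hg0 C₀ hC₀ μ x i, hx]
        rfl
      rwa [hx0] at h1
    have hsum : Tendsto (fun k => ∑ i, |(VField g (μs k) x) i|) atTop (𝓝 0) := by
      have h0 : Tendsto (fun k => ∑ i, |(VField g (μs k) x) i|) atTop
          (𝓝 (∑ _i : Fin n, |(0:ℝ)|)) :=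
        tendsto_finset_sum _ (fun i _ => (hcoord i).abs)
      simpa using h0
    exact squeeze_zero (fun k => norm_nonneg _) (fun k => eucl_norm_le_sum_abs _) hsum
  -- the modulus of continuity for the monotonicity functionals
  set R₁ : ℝ := T₀ + ‖x‖ with hR₁def
  have hR₁0 : 0 < R₁ := by positivity
  have hfint : ∀ (ν : Measure (EuclideanSpace ℝ (Fin n))), IsFiniteMeasure ν →
      ∀ a : EuclideanSpace ℝ (Fin n), Integrable
        (fun y => ⟪radialField g (a + y) - radialField g (x + y), a - x⟫) ν := by
    intro ν hν a
    haveI := hν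
    apply bc_integrable (Continuous.inner ((hvcont.comp (continuous_const.add continuous_id)).sub
      (hvcont.comp (continuous_const.add continuous_id))) continuous_const) (2 * C₀ * ‖a - x‖)
    intro y
    rw [Real.norm_eq_abs]
    refine le_trans (abs_real_inner_le_norm _ _) ?_
    have h1 : ‖radialField g (a + y) - radialField g (x + y)‖ ≤ 2 * C₀ :=
      le_trans (norm_sub_le _ _) (by linarith [hvbd (a + y), hvbd (x + y)])
    exact mul_le_mul_of_nonneg_right h1 (norm_nonneg _)
  have hmod : ∀ τ : ℝ, 0 < τ → ∃ ρ > 0,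
      ∀ (ν : Measure (EuclideanSpace ℝ (Fin n))), IsFiniteMeasure ν →
      (ν Set.univ).toReal ≤ B → ∀ a a' : EuclideanSpace ℝ (Fin n), dist a x ≤ R₁ →
      dist a a' < ρ →
      |(∫ y, ⟪radialField g (a + y) - radialField g (x + y), a - x⟫ ∂ν)
        - ∫ y, ⟪radialField g (a' + y) - radialField g (x + y), a' - x⟫ ∂ν| ≤ τ := by
    intro τ hτ
    have hUC := radialField_uniformContinuous (n := n) g hg_cont hg0 C₀ hC₀ ginf hg_lim
    rw [Metric.uniformContinuous_iff] at hUC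
    set εv : ℝ := τ / (2 * (R₁ + 1) * (B + 1)) with hεvdef
    have hεv : 0 < εv := by positivity
    obtain ⟨ρ₁, hρ₁pos, hρ₁⟩ := hUC εv hεv
    set ρ₂ : ℝ := τ / (2 * (2 * C₀ + 1) * (B + 1)) with hρ₂def
    have hρ₂pos : 0 < ρ₂ := by positivity
    refine ⟨min ρ₁ ρ₂, lt_min hρ₁pos hρ₂pos, ?_⟩
    intro ν hν hνB a a' hax haa'
    haveI := hν
    set D : ℝ := εv * R₁ + 2 * C₀ * ρ₂ with hDdef
    have hpt : ∀ y, |⟪radialField g (a + y) - radialField g (x + y), a - x⟫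
        - ⟪radialField g (a' + y) - radialField g (x + y), a' - x⟫| ≤ D := by
      intro y
      have hid : ⟪radialField g (a + y) - radialField g (x + y), a - x⟫
          - ⟪radialField g (a' + y) - radialField g (x + y), a' - x⟫
          = ⟪radialField g (a + y) - radialField g (a' + y), a - x⟫
            + ⟪radialField g (a' + y) - radialField g (x + y), a - a'⟫ := by
        simp only [inner_sub_left, inner_sub_right]
        ring
      rw [hid]
      have hb1 : |⟪radialField g (a + y) - radialField g (a' + y), a - x⟫| ≤ εv * R₁ := by
        refine le_trans (abs_real_inner_le_norm _ _) ?_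
        have hd : dist (a + y) (a' + y) < ρ₁ := by
          rw [dist_add_right]
          exact lt_of_lt_of_le haa' (min_le_left _ _)
        have h1 : ‖radialField g (a + y) - radialField g (a' + y)‖ ≤ εv := by
          have := hρ₁ hd
          rw [dist_eq_norm] at this
          exact this.le
        have h2 : ‖a - x‖ ≤ R₁ := by rwa [← dist_eq_norm]
        exact mul_le_mul h1 h2 (norm_nonneg _) hεv.le
      have hb2 : |⟪radialField g (a' + y) - radialField g (x + y), a - a'⟫| ≤ 2 * C₀ * ρ₂ := by
        refine le_trans (abs_real_inner_le_norm _ _) ?_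
        have h1 : ‖radialField g (a' + y) - radialField g (x + y)‖ ≤ 2 * C₀ :=
          le_trans (norm_sub_le _ _) (by linarith [hvbd (a' + y), hvbd (x + y)])
        have h2 : ‖a - a'‖ ≤ ρ₂ := by
          rw [← dist_eq_norm]
          exact le_of_lt (lt_of_lt_of_le haa' (min_le_right _ _))
        exact mul_le_mul h1 h2 (norm_nonneg _) (by linarith)
      calc |⟪radialField g (a + y) - radialField g (a' + y), a - x⟫
            + ⟪radialField g (a' + y) - radialField g (x + y), a - a'⟫|
          ≤ |⟪radialField g (a + y) - radialField g (a' + y), a - x⟫|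
            + |⟪radialField g (a' + y) - radialField g (x + y), a - a'⟫| := abs_add_le _ _
        _ ≤ εv * R₁ + 2 * C₀ * ρ₂ := add_le_add hb1 hb2
    have hD0 : 0 ≤ D := by
      have : 0 ≤ εv * R₁ := by positivity
      have : 0 ≤ 2 * C₀ * ρ₂ := by positivity
      rw [hDdef]; positivity
    have hDB : D * B ≤ τ := by
      have key1 : εv * R₁ * B ≤ τ / 2 := by
        rw [hεvdef, div_mul_eq_mul_div, div_mul_eq_mul_div, div_le_div_iff₀ (by positivity) two_pos]
        nlinarith [mul_nonneg hτ.le (by nlinarith : (0:ℝ) ≤ (R₁+1)*(B+1) - R₁*B)]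
      have key2 : 2 * C₀ * ρ₂ * B ≤ τ / 2 := by
        rw [hρ₂def, show 2 * C₀ * (τ / (2 * (2 * C₀ + 1) * (B + 1))) * B
            = (2 * C₀ * τ * B) / (2 * (2 * C₀ + 1) * (B + 1)) by ring,
          div_le_div_iff₀ (by positivity) two_pos]
        nlinarith [mul_nonneg hτ.le (by nlinarith : (0:ℝ) ≤ (2*C₀+1)*(B+1) - 2*C₀*B)]
      calc D * B = εv * R₁ * B + 2 * C₀ * ρ₂ * B := by rw [hDdef]; ring
        _ ≤ τ / 2 + τ / 2 := add_le_add key1 key2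
        _ = τ := by ring
    have hsub : (∫ y, ⟪radialField g (a + y) - radialField g (x + y), a - x⟫ ∂ν)
        - ∫ y, ⟪radialField g (a' + y) - radialField g (x + y), a' - x⟫ ∂ν
        = ∫ y, (⟪radialField g (a + y) - radialField g (x + y), a - x⟫
          - ⟪radialField g (a' + y) - radialField g (x + y), a' - x⟫) ∂ν :=
      (integral_sub (hfint ν hν a) (hfint ν hν a')).symm
    rw [hsub]
    have habs : |∫ y, (⟪radialField g (a + y) - radialField g (x + y), a - x⟫
        - ⟪radialField g (a' + y) - radialField g (x + y), a' - x⟫) ∂ν|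
        ≤ ∫ y, |⟪radialField g (a + y) - radialField g (x + y), a - x⟫
          - ⟪radialField g (a' + y) - radialField g (x + y), a' - x⟫| ∂ν := by
      simpa [Real.norm_eq_abs] using norm_integral_le_integral_norm (μ := ν)
        (fun y => ⟪radialField g (a + y) - radialField g (x + y), a - x⟫
          - ⟪radialField g (a' + y) - radialField g (x + y), a' - x⟫)
    refine le_trans (le_trans habs ?_) hDB
    calc ∫ y, |⟪radialField g (a + y) - radialField g (x + y), a - x⟫
          - ⟪radialField g (a' + y) - radialField g (x + y), a' - x⟫| ∂ν
        ≤ ∫ _, D ∂ν := by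
          apply integral_mono _ (integrable_const D) hpt
          exact ((hfint ν hν a).sub (hfint ν hν a')).abs
      _ = (ν Set.univ).toReal * D := by rw [integral_const, smul_eq_mul, measureReal_def]
      _ ≤ B * D := mul_le_mul_of_nonneg_right hνB hD0
      _ = D * B := mul_comm _ _
  -- final argument
  rw [Metric.tendsto_nhds]
  intro ε hε
  have hdistR : ∀ᶠ k in atTop, dist (xc k) x ≤ R₁ := by
    filter_upwards [hbound] with k hk
    calc dist (xc k) x ≤ ‖xc k‖ + ‖x‖ := by
          rw [dist_eq_norm]; exact norm_sub_le _ _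
      _ ≤ T₀ + ‖x‖ := by linarith
  by_cases hεR : R₁ < ε
  · filter_upwards [hdistR] with k hk
    linarith
  push_neg at hεR
  -- the compact annulus
  set A : Set (EuclideanSpace ℝ (Fin n)) := Metric.closedBall x R₁ \ Metric.ball x ε with hAdef
  have hAcomp : IsCompact A := (isCompact_closedBall x R₁).diff Metric.isOpen_ball
  have hAne : A.Nonempty := by
    refine ⟨x + ε • EuclideanSpace.single (⟨0, by omega⟩ : Fin n) (1:ℝ), ?_, ?_⟩
    · rw [Metric.mem_closedBall, dist_eq_norm, add_sub_cancel_left, norm_smul,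
        EuclideanSpace.norm_single, Real.norm_eq_abs, abs_of_pos hε, norm_one, mul_one]
      exact hεR
    · rw [Metric.mem_ball, dist_eq_norm, add_sub_cancel_left, norm_smul,
        EuclideanSpace.norm_single, Real.norm_eq_abs, abs_of_pos hε, norm_one, mul_one]
      exact lt_irrefl ε
  set h : EuclideanSpace ℝ (Fin n) → ℝ :=
    fun a => ∫ y, ⟪radialField g (a + y) - radialField g (x + y), a - x⟫ ∂μ with hhdef
  have hμB : (μ Set.univ).toReal ≤ B := by rw [← hTdef]; linarith
  have hcont : ContinuousOn h A := by
    intro a ha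
    rw [Metric.continuousWithinAt_iff]
    intro ε' hε'
    obtain ⟨ρ, hρpos, hρ⟩ := hmod (ε'/2) (by positivity)
    refine ⟨ρ, hρpos, ?_⟩
    intro b hb hba
    have hbx : dist b x ≤ R₁ := Metric.mem_closedBall.mp hb.1
    have := hρ μ ⟨hμfin⟩ hμB b a hbx hba
    rw [Real.dist_eq]
    calc |h b - h a| ≤ ε'/2 := this
      _ < ε' := by linarith
  have hposA : ∀ a ∈ A, 0 < h a := by
    intro a ha
    have hax : a ≠ x := by
      intro hcontra
      exact ha.2 (by rw [hcontra]; exact Metric.mem_ball_self hε)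
    have hptpos : ∀ y, 0 < ⟪radialField g (a + y) - radialField g (x + y), a - x⟫ := by
      intro y
      have hne : a + y ≠ x + y := fun hcontra => hax (by
        have := congrArg (fun w => w - y) hcontra
        simpa using this)
      have := radialField_strictMono g hg0 hg_mono (a + y) (x + y) hne
      have heq : (a + y) - (x + y) = a - x := by abel
      rwa [heq] at this
    rw [hhdef]
    apply (integral_pos_iff_support_of_nonneg (fun y => (hptpos y).le)
      (hfint μ ⟨hμfin⟩ a)).mpr
    have hsupp : Function.support
        (fun y => ⟪radialField g (a + y) - radialField g (x + y), a - x⟫) = Set.univ :=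
      Set.eq_univ_iff_forall.mpr (fun y => (hptpos y).ne')
    rw [hsupp]
    exact hμpos
  obtain ⟨amin, haminA, hamin'⟩ := hAcomp.exists_isMinOn hAne hcont
  have hamin : ∀ a ∈ A, h amin ≤ h a := fun a ha => hamin' ha
  set δ : ℝ := h amin with hδdef
  have hδpos : 0 < δ := hposA amin haminA
  obtain ⟨ρ, hρpos, hρ⟩ := hmod (δ/4) (by positivity)
  have hcover : A ⊆ ⋃ a ∈ A, Metric.ball a ρ := fun a ha =>
    Set.mem_iUnion₂.mpr ⟨a, ha, Metric.mem_ball_self hρpos⟩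
  obtain ⟨t, htA, htfin, htcov⟩ :=
    hAcomp.elim_finite_subcover_image (fun a _ => Metric.isOpen_ball) hcover
  -- pointwise convergence on the finite net
  have hnet : ∀ᶠ k in atTop, ∀ a ∈ htfin.toFinset,
      |(∫ y, ⟪radialField g (a + y) - radialField g (x + y), a - x⟫ ∂(μs k)) - h a| < δ/4 := by
    rw [Filter.eventually_all_finset]
    intro a _
    have hψc : Continuous (fun y : EuclideanSpace ℝ (Fin n) =>
        ⟪radialField g (a + y) - radialField g (x + y), a - x⟫) :=
      Continuous.inner ((hvcont.comp (continuous_const.add continuous_id)).sub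
        (hvcont.comp (continuous_const.add continuous_id))) continuous_const
    have hψb : ∃ Cb : ℝ, ∀ y, |⟪radialField g (a + y) - radialField g (x + y), a - x⟫| ≤ Cb := by
      refine ⟨2 * C₀ * ‖a - x‖, fun y => ?_⟩
      refine le_trans (abs_real_inner_le_norm _ _) ?_
      have h1 : ‖radialField g (a + y) - radialField g (x + y)‖ ≤ 2 * C₀ :=
        le_trans (norm_sub_le _ _) (by linarith [hvbd (a + y), hvbd (x + y)])
      exact mul_le_mul_of_nonneg_right h1 (norm_nonneg _)
    have h1 := hweak _ hψc hψb
    have := (Metric.tendsto_nhds.mp h1) (δ/4) (by positivity)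
    filter_upwards [this] with k hk
    rwa [Real.dist_eq] at hk
  have hmassB : ∀ᶠ k in atTop, ((μs k) Set.univ).toReal ≤ B :=
    hmass.eventually (eventually_le_nhds (by linarith : T < B))
  have hVsmall : ∀ᶠ k in atTop, ‖VField g (μs k) x‖ * R₁ < δ/4 := by
    have h0 : Tendsto (fun k => ‖VField g (μs k) x‖ * R₁) atTop (𝓝 (0 * R₁)) :=
      hVx.mul_const _
    rw [zero_mul] at h0
    exact h0.eventually (eventually_lt_nhds (by positivity))
  filter_upwards [hdistR, hmassB, hnet, hVsmall] with k hkR hkmass hknet hkV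
  by_contra hcon
  push_neg at hcon
  have hmemA : xc k ∈ A :=
    ⟨Metric.mem_closedBall.mpr hkR, fun hmem => absurd (Metric.mem_ball.mp hmem)
      (not_lt.mpr hcon)⟩
  obtain ⟨a, hat, haball⟩ := Set.mem_iUnion₂.mp (htcov hmemA)
  haveI := hinst k
  have hm := hρ (μs k) (hinst k) hkmass (xc k) a hkR (Metric.mem_ball.mp haball)
  have hat' : a ∈ htfin.toFinset := htfin.mem_toFinset.mpr hat
  have hnetA := hknet a hat'
  have hha : δ ≤ h a := hamin a (htA hat)
  -- identify the functional at xc k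
  have hHk : (∫ y, ⟪radialField g (xc k + y) - radialField g (x + y), xc k - x⟫ ∂(μs k))
      = - ⟪VField g (μs k) x, xc k - x⟫ := by
    have i1 : Integrable (fun y => ⟪radialField g (xc k + y), xc k - x⟫) (μs k) := by
      apply bc_integrable ((hvcont.comp (continuous_const.add continuous_id)).inner
        continuous_const) (C₀ * ‖xc k - x‖)
      intro y
      rw [Real.norm_eq_abs]
      exact le_trans (abs_real_inner_le_norm _ _)
        (mul_le_mul_of_nonneg_right (hvbd _) (norm_nonneg _))
    have i2 : Integrable (fun y => ⟪radialField g (x + y), xc k - x⟫) (μs k) := by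
      apply bc_integrable ((hvcont.comp (continuous_const.add continuous_id)).inner
        continuous_const) (C₀ * ‖xc k - x‖)
      intro y
      rw [Real.norm_eq_abs]
      exact le_trans (abs_real_inner_le_norm _ _)
        (mul_le_mul_of_nonneg_right (hvbd _) (norm_nonneg _))
    calc (∫ y, ⟪radialField g (xc k + y) - radialField g (x + y), xc k - x⟫ ∂(μs k))
        = ∫ y, (⟪radialField g (xc k + y), xc k - x⟫
          - ⟪radialField g (x + y), xc k - x⟫) ∂(μs k) := by
          simp_rw [inner_sub_left]
      _ = (∫ y, ⟪radialField g (xc k + y), xc k - x⟫ ∂(μs k))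
          - ∫ y, ⟪radialField g (x + y), xc k - x⟫ ∂(μs k) := integral_sub i1 i2
      _ = ⟪VField g (μs k) (xc k), xc k - x⟫ - ⟪VField g (μs k) x, xc k - x⟫ := by
          rw [← inner_VField g hg_cont hg0 C₀ hC₀ (μs k) (xc k) (xc k - x),
            ← inner_VField g hg_cont hg0 C₀ hC₀ (μs k) x (xc k - x)]
      _ = - ⟪VField g (μs k) x, xc k - x⟫ := by
          rw [hxc k, inner_zero_left]
          ring
  have hlow : δ/2 ≤ ∫ y, ⟪radialField g (xc k + y) - radialField g (x + y), xc k - x⟫ ∂(μs k) := by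
    have e1 := (abs_le.mp hm).1
    have e2 := (abs_lt.mp hnetA).1
    linarith
  have hup : (∫ y, ⟪radialField g (xc k + y) - radialField g (x + y), xc k - x⟫ ∂(μs k))
      ≤ ‖VField g (μs k) x‖ * R₁ := by
    rw [hHk]
    calc - ⟪VField g (μs k) x, xc k - x⟫ ≤ |⟪VField g (μs k) x, xc k - x⟫| :=
          neg_le_abs _
      _ ≤ ‖VField g (μs k) x‖ * ‖xc k - x‖ := abs_real_inner_le_norm _ _
      _ ≤ ‖VField g (μs k) x‖ * R₁ := by
          apply mul_le_mul_of_nonneg_left _ (norm_nonneg _)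
          rwa [← dist_eq_norm]
  have hfinal := (hlow.trans hup).trans_lt hkV
  linarith
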